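/- For n ≥ 2 and k ∈ ℝ, define h_k(t) = (∫₀ᵗ s_k(r)^{n-1} dr) / s_k(t)^{n-1}, where s_k(r) = r if k = 0, s_k(r) = sin(√k r)/√k if k > 0, and s_k(r) = sinh(√(-k) r)/√(-k) if k < 0. Then h_k is increasing on (0, l), where l = ∞ if k ≤ 0 and l = π/√k if k > 0. -/

import Mathlib

open Set intervalIntegral MeasureTheory

/-- Generalized sine `s_k`. -/
noncomputable def sk (k t : ℝ) : ℝ :=
  if k = 0 then t
  else if 0 < k then Real.sin (Real.sqrt k * t) / Real.sqrt k
  else Real.sinh (Real.sqrt (-k) * t) / Real.sqrt (-k)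

/-- The volume-to-area ratio `h_k(t)` of geodesic balls of radius `t` in the
`n`-dimensional simply connected space form of curvature `k`. -/
noncomputable def hk (k : ℝ) (n : ℕ) (t : ℝ) : ℝ :=
  (∫ r in (0:ℝ)..t, sk k r ^ (n - 1)) / sk k t ^ (n - 1)


lemma key_mono (n : ℕ) (hn : 2 ≤ n) (s s' : ℝ → ℝ) (l : ℝ)
    (hder : ∀ t, HasDerivAt s (s' t) t)
    (hc' : Continuous s')
    (hs0 : s 0 = 0)
    (hpos : ∀ t, 0 < t → t < l → 0 < s t)
    (hcross : ∀ r t, 0 ≤ r → r ≤ t → t < l → s' t * s r ≤ s' r * s t) :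
    MonotoneOn (fun t => (∫ r in (0:ℝ)..t, s r ^ (n-1)) / s t ^ (n-1)) (Set.Ioo 0 l) := by
  have hsc : Continuous s := by
    rw [continuous_iff_continuousAt]; exact fun t => (hder t).continuousAt
  set g : ℝ → ℝ := fun t => s t ^ (n-1) with hg
  set g' : ℝ → ℝ := fun t => ((n:ℝ)-1) * s t ^ (n-2) * s' t with hg'def
  have hgc : Continuous g := hsc.pow _
  have hg'c : Continuous g' := by
    exact (continuous_const.mul (hsc.pow _)).mul hc'
  have hgd : ∀ t, HasDerivAt g (g' t) t := by
    intro t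
    have := (hder t).fun_pow (n-1)
    have hcast : ((n-1 : ℕ) : ℝ) = (n:ℝ) - 1 := by
      have : (1:ℕ) ≤ n := by omega
      push_cast [Nat.cast_sub this]; ring
    have he : n - 1 - 1 = n - 2 := by omega
    simpa [hcast, he, hg'def] using this
  set F : ℝ → ℝ := fun t => ∫ r in (0:ℝ)..t, g r with hF
  have hFd : ∀ t, HasDerivAt F (g t) t := by
    intro t
    exact intervalIntegral.integral_hasDerivAt_right
      (hgc.intervalIntegrable _ _) (hgc.stronglyMeasurableAtFilter _ _) hgc.continuousAt
  have hnn : ∀ r, 0 ≤ r → r < l → 0 ≤ s r := by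
    intro r hr hrl
    rcases eq_or_lt_of_le hr with h | h
    · simp [← h, hs0]
    · exact (hpos r h hrl).le
  have hgne : ∀ t ∈ Ioo (0:ℝ) l, g t ≠ 0 := by
    intro t ht
    exact pow_ne_zero _ (hpos t ht.1 ht.2).ne'
  have hhd : ∀ t ∈ Ioo (0:ℝ) l,
      HasDerivAt (fun u => F u / g u) ((g t * g t - F t * g' t) / (g t)^2) t := by
    intro t ht
    exact (hFd t).div (hgd t) (hgne t ht)
  -- numerator nonneg
  have hnum : ∀ t ∈ Ioo (0:ℝ) l, F t * g' t ≤ g t * g t := by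
    intro t ht
    have h1 : F t * g' t = ∫ r in (0:ℝ)..t, g r * g' t := by
      rw [hF]; rw [← intervalIntegral.integral_mul_const]
    have h2 : (∫ r in (0:ℝ)..t, g' r) = g t := by
      rw [intervalIntegral.integral_eq_sub_of_hasDerivAt
        (fun x _ => hgd x) (hg'c.intervalIntegrable _ _)]
      have : g 0 = 0 := by simp [hg, hs0, zero_pow (by omega : n - 1 ≠ 0)]
      rw [this, sub_zero]
    have h3 : (∫ r in (0:ℝ)..t, g' r * g t) = g t * g t := by
      rw [intervalIntegral.integral_mul_const, h2]
    rw [h1, ← h3]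
    apply intervalIntegral.integral_mono_on ht.1.le
      ((hgc.mul continuous_const).intervalIntegrable _ _)
      ((hg'c.mul continuous_const).intervalIntegrable _ _)
    intro r hr
    have hrl : r < l := lt_of_le_of_lt hr.2 ht.2
    have hsr : 0 ≤ s r := hnn r hr.1 hrl
    have hst : 0 ≤ s t := hnn t ht.1.le ht.2
    have hcr := hcross r t hr.1 hr.2 ht.2
    have he1 : n - 1 = (n-2) + 1 := by omega
    have : g r * g' t = ((n:ℝ)-1) * (s r ^ (n-2) * s t ^ (n-2)) * (s' t * s r) := by
      simp only [hg, hg'def, he1, pow_succ]; ring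
    show g r * g' t ≤ g' r * g t
    rw [this]
    have : g' r * g t = ((n:ℝ)-1) * (s r ^ (n-2) * s t ^ (n-2)) * (s' r * s t) := by
      simp only [hg, hg'def, he1, pow_succ]; ring
    rw [this]
    apply mul_le_mul_of_nonneg_left hcr
    have h1n : (1:ℝ) ≤ (n:ℝ) := by exact_mod_cast (by omega : 1 ≤ n)
    have : (0:ℝ) ≤ (n:ℝ)-1 := by linarith
    exact mul_nonneg this (mul_nonneg (pow_nonneg hsr _) (pow_nonneg hst _))
  have hconv : Convex ℝ (Ioo (0:ℝ) l) := convex_Ioo _ _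
  have hint : interior (Ioo (0:ℝ) l) = Ioo 0 l := interior_Ioo
  apply monotoneOn_of_deriv_nonneg hconv
  · intro t ht
    exact ((hhd t ht).continuousAt).continuousWithinAt
  · rw [hint]
    intro t ht
    exact ((hhd t ht).differentiableAt).differentiableWithinAt
  · rw [hint]
    intro t ht
    rw [(hhd t ht).deriv]
    apply div_nonneg _ (sq_nonneg _)
    linarith [hnum t ht]
lemma sk_zero : sk 0 = fun t => t := by funext t; simp [sk]

lemma sk_neg {k : ℝ} (h : k < 0) :
    sk k = fun t => Real.sinh (Real.sqrt (-k) * t) / Real.sqrt (-k) := by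
  funext t; simp [sk, h.ne, not_lt.2 h.le]

lemma sk_pos {k : ℝ} (h : 0 < k) :
    sk k = fun t => Real.sin (Real.sqrt k * t) / Real.sqrt k := by
  funext t; simp [sk, h.ne', h]

-- derivative helpers
lemma hderiv_sinh (c : ℝ) (hc : 0 < c) (t : ℝ) :
    HasDerivAt (fun t => Real.sinh (c * t) / c) (Real.cosh (c * t)) t := by
  have h1 : HasDerivAt (fun t : ℝ => c * t) c t := by
    simpa using (hasDerivAt_id t).const_mul c
  have h2 := (Real.hasDerivAt_sinh (c * t)).comp t h1
  have h3 := h2.div_const c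
  simpa [mul_div_assoc, mul_div_cancel_right₀ _ hc.ne'] using h3

lemma hderiv_sin (c : ℝ) (hc : 0 < c) (t : ℝ) :
    HasDerivAt (fun t => Real.sin (c * t) / c) (Real.cos (c * t)) t := by
  have h1 : HasDerivAt (fun t : ℝ => c * t) c t := by
    simpa using (hasDerivAt_id t).const_mul c
  have h2 := (Real.hasDerivAt_sin (c * t)).comp t h1
  have h3 := h2.div_const c
  simpa [mul_div_assoc, mul_div_cancel_right₀ _ hc.ne'] using h3

lemma mono_Ioo (n : ℕ) (hn : 2 ≤ n) (k l : ℝ) (hkl : k ≤ 0 ∨ (0 < k ∧ l = Real.pi / Real.sqrt k)) :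
    MonotoneOn (fun t => (∫ r in (0:ℝ)..t, sk k r ^ (n-1)) / sk k t ^ (n-1)) (Set.Ioo 0 l) := by
  rcases hkl with hk | ⟨hk, rfl⟩
  · rcases eq_or_lt_of_le hk with rfl | hk
    · rw [sk_zero]
      exact key_mono n hn _ (fun _ => 1) l (fun t => hasDerivAt_id t) continuous_const rfl
        (fun t ht _ => ht) (fun r t hr hrt _ => by simpa using hrt)
    · set c := Real.sqrt (-k) with hc
      have hcpos : 0 < c := Real.sqrt_pos.2 (by linarith)
      rw [sk_neg hk]
      apply key_mono n hn _ (fun t => Real.cosh (c * t)) l (hderiv_sinh c hcpos)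
        (Real.continuous_cosh.comp (continuous_const.mul continuous_id))
      · simp
      · intro t ht _
        exact div_pos (Real.sinh_pos_iff.2 (by positivity)) hcpos
      · intro r t hr hrt _
        rw [mul_div_assoc', mul_div_assoc', div_le_div_iff_of_pos_right hcpos]
        have h0 : 0 ≤ Real.sinh (c * t - c * r) := by
          rw [Real.sinh_nonneg_iff]
          nlinarith
        rw [Real.sinh_sub] at h0
        linarith
  · set c := Real.sqrt k with hc
    have hcpos : 0 < c := Real.sqrt_pos.2 hk
    rw [sk_pos hk]
    apply key_mono n hn _ (fun t => Real.cos (c * t)) _ (hderiv_sin c hcpos)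
      (Real.continuous_cos.comp (continuous_const.mul continuous_id))
    · simp
    · intro t ht htl
      have hct : c * t < Real.pi := (lt_div_iff₀' hcpos).mp htl
      exact div_pos (Real.sin_pos_of_pos_of_lt_pi (by positivity) hct) hcpos
    · intro r t hr hrt htl
      have hct : c * t < Real.pi := (lt_div_iff₀' hcpos).mp htl
      rw [mul_div_assoc', mul_div_assoc', div_le_div_iff_of_pos_right hcpos]
      have h0 : 0 ≤ Real.sin (c * t - c * r) := by
        apply Real.sin_nonneg_of_nonneg_of_le_pi
        · nlinarith
        · nlinarith [Real.pi_pos]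
      rw [Real.sin_sub] at h0
      linarith

lemma sk_zero' : sk 0 = fun t => t := by funext t; simp [sk]

/-- `h_k` is increasing on `(0, l)` where `l = ∞` if `k ≤ 0` and `l = π/√k` if `k > 0`. -/
theorem stmt_3 (n : ℕ) (hn : 2 ≤ n) (k : ℝ) :
    (k ≤ 0 → MonotoneOn (hk k n) (Set.Ioi 0)) ∧
    (0 < k → MonotoneOn (hk k n) (Set.Ioo 0 (Real.pi / Real.sqrt k))) := by
  have heq : hk k n = fun t => (∫ r in (0:ℝ)..t, sk k r ^ (n-1)) / sk k t ^ (n-1) := rfl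
  constructor
  · intro hk0 x hx y hy hxy
    have hm := mono_Ioo n hn k (y+1) (Or.inl hk0)
    rw [heq]
    exact hm ⟨hx, by simp only [mem_Ioi] at hx hy; linarith⟩
      ⟨hy, by simp only [mem_Ioi] at hy; linarith⟩ hxy
  · intro hkp
    rw [heq]
    exact mono_Ioo n hn k _ (Or.inr ⟨hkp, rfl⟩)
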